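/- Let Ω ⊆ ℝ^{n+1} with (0,…,0,1) ∈ Ω and 0 ∉ Ω, and suppose cl cone(Ω) is pointed. Then for every extreme ray r of cl cone(Ω), either r is a positive multiple of some element of Ω, or there exists a sequence of pairwise non-proportional elements r^i ∈ Ω and positive scalars λ_i with λ_i r^i → r. -/

import Mathlib

open Module Set Filter

/-- The conical hull of a set: all finite nonnegative combinations. -/
def conicalHull {E : Type*} [AddCommMonoid E] [Module ℝ E] (s : Set E) : Set E :=
  {x | ∃ (k : ℕ) (c : Fin k → ℝ) (v : Fin k → E),
    (∀ i, 0 ≤ c i) ∧ (∀ i, v i ∈ s) ∧ x = ∑ i, c i • v i}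

lemma aux_isCompact_convexHull {E : Type*} [NormedAddCommGroup E] [NormedSpace ℝ E]
    [FiniteDimensional ℝ E] {s : Set E} (hs : IsCompact s) :
    IsCompact (convexHull ℝ s) := by
  rcases s.eq_empty_or_nonempty with rfl | ⟨z0, hz0⟩
  · simp
  set d := finrank ℝ E + 1 with hd
  have himg : convexHull ℝ s =
      (fun p : (Fin d → ℝ) × (Fin d → E) => ∑ i, p.1 i • p.2 i) ''
        ((stdSimplex ℝ (Fin d)) ×ˢ (Set.univ.pi fun _ : Fin d => s)) := by
    apply Set.Subset.antisymm
    · intro x hx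
      obtain ⟨ι, hι, z, w, hzs, hai, hw0, hw1, hsum⟩ :=
        eq_pos_convex_span_of_mem_convexHull hx
      have hcard : Fintype.card ι ≤ d := by
        have h1 := hai.card_le_finrank_succ
        have h2 : finrank ℝ (vectorSpan ℝ (Set.range z)) ≤ finrank ℝ E :=
          Submodule.finrank_le _
        omega
      set m := Fintype.card ι with hm
      have eι : ι ≃ Fin m := Fintype.equivFin ι
      set W : ℕ → ℝ := fun k => if h : k < m then w (eι.symm ⟨k, h⟩) else 0 with hW
      set V : ℕ → E := fun k => if h : k < m then z (eι.symm ⟨k, h⟩) else z0 with hV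
      refine ⟨(fun j : Fin d => W j.1, fun j : Fin d => V j.1), ⟨⟨?_, ?_⟩, ?_⟩, ?_⟩
      · intro j
        by_cases h : (j : ℕ) < m <;> simp [hW, h]
        exact le_of_lt (hw0 _)
      · have : ∑ j : Fin d, W j.1 = ∑ k ∈ Finset.range d, W k :=
          Fin.sum_univ_eq_sum_range W d
        rw [this, ← Finset.sum_subset (Finset.range_subset_range.2 hcard)
            (fun k _ hk => by simp [hW, by simpa using hk])]
        have : ∑ k ∈ Finset.range m, W k = ∑ k : Fin m, W k.1 :=
          (Fin.sum_univ_eq_sum_range W m).symm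
        rw [this]
        have : ∀ k : Fin m, W k.1 = w (eι.symm k) := fun k => by simp [hW, k.2]
        simp_rw [this]
        rw [Equiv.sum_comp eι.symm w]
        exact hw1
      · intro j _
        by_cases h : (j : ℕ) < m <;> simp [hV, h]
        · exact hzs ⟨_, rfl⟩
        · exact hz0
      · show ∑ j : Fin d, W j.1 • V j.1 = x
        have e1 : ∑ j : Fin d, W j.1 • V j.1 = ∑ k ∈ Finset.range d, W k • V k :=
          Fin.sum_univ_eq_sum_range (fun k => W k • V k) d
        rw [e1, ← Finset.sum_subset (Finset.range_subset_range.2 hcard)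
            (fun k _ hk => by simp [hW, by simpa using hk])]
        have e2 : ∑ k ∈ Finset.range m, W k • V k = ∑ k : Fin m, W k.1 • V k.1 :=
          (Fin.sum_univ_eq_sum_range (fun k => W k • V k) m).symm
        rw [e2]
        have : ∀ k : Fin m, W k.1 • V k.1 = w (eι.symm k) • z (eι.symm k) := fun k => by
          simp [hW, hV, k.2]
        simp_rw [this]
        rw [Equiv.sum_comp eι.symm (fun i => w i • z i)]
        exact hsum
    · rintro x ⟨⟨wt, v⟩, ⟨hwt, hv⟩, rfl⟩
      have := Finset.centerMass_mem_convexHull (Finset.univ : Finset (Fin d))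
        (fun i _ => hwt.1 i) (by rw [hwt.2]; norm_num) (fun i _ => hv i (Set.mem_univ i))
      rwa [Finset.centerMass_eq_of_sum_1 _ _ hwt.2] at this
  rw [himg]
  exact ((isCompact_stdSimplex _ _).prod (isCompact_univ_pi fun _ => hs)).image
    (continuous_finset_sum _ fun i _ =>
      (((continuous_apply i).comp continuous_fst).smul ((continuous_apply i).comp continuous_snd)))

variable {E : Type*} [NormedAddCommGroup E] [NormedSpace ℝ E]

lemma mem_conicalHull_self {s : Set E} {x : E} (hx : x ∈ s) : x ∈ conicalHull s :=
  ⟨1, fun _ => 1, fun _ => x, fun _ => zero_le_one, fun _ => hx, by simp⟩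

lemma conicalHull_add {s : Set E} {a b : E} (ha : a ∈ conicalHull s) (hb : b ∈ conicalHull s) :
    a + b ∈ conicalHull s := by
  obtain ⟨k1, c1, v1, hc1, hv1, rfl⟩ := ha
  obtain ⟨k2, c2, v2, hc2, hv2, rfl⟩ := hb
  refine ⟨k1 + k2, Fin.append c1 c2, Fin.append v1 v2, ?_, ?_, ?_⟩
  · intro i
    exact Fin.addCases (motive := fun i => 0 ≤ Fin.append c1 c2 i)
      (fun j => by simp [Fin.append_left, hc1 j])
      (fun j => by simp [Fin.append_right, hc2 j]) i
  · intro i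
    exact Fin.addCases (motive := fun i => Fin.append v1 v2 i ∈ s)
      (fun j => by simp [Fin.append_left, hv1 j])
      (fun j => by simp [Fin.append_right, hv2 j]) i
  · rw [Fin.sum_univ_add]
    simp [Fin.append_left, Fin.append_right]

lemma conicalHull_smul {s : Set E} {a : E} {t : ℝ} (ht : 0 ≤ t) (ha : a ∈ conicalHull s) :
    t • a ∈ conicalHull s := by
  obtain ⟨k, c, v, hc, hv, rfl⟩ := ha
  exact ⟨k, fun i => t * c i, v, fun i => mul_nonneg ht (hc i), hv, by
    rw [Finset.smul_sum]; simp [smul_smul]⟩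

lemma conicalHull_convex (s : Set E) : Convex ℝ (conicalHull s) := fun x hx y hy a b ha hb _ =>
  conicalHull_add (conicalHull_smul ha hx) (conicalHull_smul hb hy)

lemma aux_pos_functional [FiniteDimensional ℝ E]
    {C : Set E} (hclosed : IsClosed C)
    (hadd : ∀ a ∈ C, ∀ b ∈ C, a + b ∈ C) (hsmul : ∀ t : ℝ, 0 ≤ t → ∀ a ∈ C, t • a ∈ C)
    (hpointed : C ∩ (-C) = {0}) :
    ∃ f : E →L[ℝ] ℝ, ∀ x ∈ C, x ≠ 0 → 0 < f x := by
  have h0C : (0 : E) ∈ C := by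
    have : (0 : E) ∈ ({0} : Set E) := rfl
    rw [← hpointed] at this; exact this.1
  set M := convexHull ℝ (C ∩ Metric.sphere 0 1) with hM
  have hcpt : IsCompact (C ∩ Metric.sphere 0 1) :=
    (isCompact_sphere (0 : E) 1).of_isClosed_subset (hclosed.inter Metric.isClosed_sphere)
      inter_subset_right
  have hMcpt : IsCompact M := aux_isCompact_convexHull hcpt
  have h0M : (0 : E) ∉ M := by
    intro h
    classical
    obtain ⟨ι, hι, z, w, hzs, _, hw0, hw1, hsum⟩ := eq_pos_convex_span_of_mem_convexHull h
    have hne : Nonempty ι := by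
      by_contra hne
      rw [not_nonempty_iff] at hne
      rw [Finset.univ_eq_empty, Finset.sum_empty] at hw1
      norm_num at hw1
    obtain ⟨i0⟩ := hne
    have hzC : ∀ i, z i ∈ C ∩ Metric.sphere 0 1 := fun i => hzs ⟨i, rfl⟩
    have hsum' : w i0 • z i0 + ∑ i ∈ Finset.univ.erase i0, w i • z i = 0 := by
      rw [← hsum]
      exact Finset.add_sum_erase _ (fun i => w i • z i) (Finset.mem_univ i0)
    have h1 : w i0 • z i0 ∈ C := hsmul _ (le_of_lt (hw0 i0)) _ (hzC i0).1
    have h2 : ∑ i ∈ Finset.univ.erase i0, w i • z i ∈ C := by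
      refine Finset.sum_induction _ (· ∈ C) (fun a b ha hb => hadd a ha b hb) h0C ?_
      exact fun i _ => hsmul _ (le_of_lt (hw0 i)) _ (hzC i).1
    have h3 : w i0 • z i0 ∈ C ∩ (-C) := by
      refine ⟨h1, ?_⟩
      rw [Set.mem_neg]
      rw [neg_eq_of_add_eq_zero_right hsum']
      exact h2
    rw [hpointed, Set.mem_singleton_iff, smul_eq_zero] at h3
    rcases h3 with h | h
    · exact (hw0 i0).ne' h
    · have := (hzC i0).2
      rw [h] at this
      simp at this
  obtain ⟨f, u, hfu, hub⟩ := geometric_hahn_banach_point_closed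
    (convex_convexHull ℝ _) hMcpt.isClosed h0M
  have hu : 0 < u := by simpa using hfu
  refine ⟨f, fun x hxC hx0 => ?_⟩
  have hxn : (0 : ℝ) < ‖x‖ := norm_pos_iff.2 hx0
  have hmem : ‖x‖⁻¹ • x ∈ C ∩ Metric.sphere 0 1 := by
    refine ⟨hsmul _ (by positivity) _ hxC, ?_⟩
    simp [norm_smul, abs_of_pos (inv_pos.2 hxn), inv_mul_cancel₀ (ne_of_gt hxn)]
  have := hub _ (subset_convexHull ℝ _ hmem)
  rw [map_smul] at this
  have h4 : 0 < ‖x‖⁻¹ • f x := lt_trans hu this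
  rw [smul_eq_mul] at h4
  nlinarith [inv_pos.2 hxn]

lemma aux_exists_seq [FiniteDimensional ℝ E]
    {Ω C : Set E} (h0n : (0 : E) ∉ Ω) (hC : C = closure (conicalHull Ω))
    (hpointed : C ∩ (-C) = {0}) {r : E} (hr : r ≠ 0) (hrC : r ∈ C)
    (hext : ∀ a ∈ C, ∀ b ∈ C, r = a + b →
      (∃ s : ℝ, 0 ≤ s ∧ a = s • r) ∧ (∃ s : ℝ, 0 ≤ s ∧ b = s • r)) :
    ∃ (f : E →L[ℝ] ℝ) (w : ℕ → E) (lam : ℕ → ℝ),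
      (∀ x ∈ C, x ≠ 0 → 0 < f x) ∧ (∀ k, w k ∈ Ω) ∧ (∀ k, 0 < lam k) ∧
      Filter.Tendsto (fun k => lam k • w k) Filter.atTop (nhds r) := by
  subst hC
  set CH := conicalHull Ω with hCH
  have hCc : IsClosed (closure CH) := isClosed_closure
  have hCadd : ∀ a ∈ closure CH, ∀ b ∈ closure CH, a + b ∈ closure CH := fun a ha b hb =>
    map_mem_closure₂ continuous_add ha hb fun x hx y hy => conicalHull_add hx hy
  have hCsmul : ∀ t : ℝ, 0 ≤ t → ∀ a ∈ closure CH, t • a ∈ closure CH := fun t ht a ha =>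
    map_mem_closure (continuous_const_smul t) ha fun x hx => conicalHull_smul ht hx
  obtain ⟨f, hf⟩ := aux_pos_functional hCc hCadd hCsmul hpointed
  have hΩC : ∀ ω ∈ Ω, ω ∈ closure CH := fun ω h => subset_closure (mem_conicalHull_self h)
  have hfΩ : ∀ ω ∈ Ω, 0 < f ω := fun ω h =>
    hf ω (hΩC ω h) (fun e => h0n (e ▸ h))
  have hfr : 0 < f r := hf r hrC hr
  set B := (fun ω : E => (f ω)⁻¹ • ω) '' Ω with hB
  set K := closure CH ∩ f ⁻¹' {1} with hK
  have hBK : B ⊆ K := by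
    rintro _ ⟨ω, hω, rfl⟩
    refine ⟨hCsmul _ (inv_nonneg.2 (hfΩ ω hω).le) _ (hΩC ω hω), ?_⟩
    simp [map_smul, smul_eq_mul, inv_mul_cancel₀ (hfΩ ω hω).ne']
  have hKconv : Convex ℝ K := by
    refine (Convex.inter ((conicalHull_convex Ω).closure) ?_)
    intro x hx y hy a b ha hb hab
    simp only [Set.mem_preimage, Set.mem_singleton_iff, map_add, map_smul, smul_eq_mul] at *
    rw [hx, hy]; linarith
  have hKclosed : IsClosed K := hCc.inter (isClosed_singleton.preimage f.continuous)
  -- K is bounded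
  set S := closure CH ∩ Metric.sphere (0 : E) 1 with hS
  have hScpt : IsCompact S :=
    (isCompact_sphere (0 : E) 1).of_isClosed_subset (hCc.inter Metric.isClosed_sphere)
      Set.inter_subset_right
  have hrpos : (0 : ℝ) < ‖r‖ := norm_pos_iff.2 hr
  have hSne : (‖r‖⁻¹ • r) ∈ S := by
    refine ⟨hCsmul _ (by positivity) _ hrC, ?_⟩
    simp [norm_smul, abs_of_pos (inv_pos.2 hrpos), inv_mul_cancel₀ hrpos.ne']
  obtain ⟨x0, hx0S, hmin⟩ := hScpt.exists_isMinOn ⟨_, hSne⟩ f.continuous.continuousOn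
  have hx0ne : x0 ≠ 0 := by
    intro h
    have := hx0S.2
    rw [h] at this
    simp at this
  have hm : 0 < f x0 := hf x0 hx0S.1 hx0ne
  have hKb : ∀ x ∈ K, ‖x‖ ≤ (f x0)⁻¹ := by
    intro x hx
    rcases eq_or_ne x 0 with rfl | hx0
    · simp [le_of_lt (inv_pos.2 hm)]
    have hxn : (0 : ℝ) < ‖x‖ := norm_pos_iff.2 hx0
    have hmem : ‖x‖⁻¹ • x ∈ S := by
      refine ⟨hCsmul _ (by positivity) _ hx.1, ?_⟩
      simp [norm_smul, abs_of_pos (inv_pos.2 hxn), inv_mul_cancel₀ hxn.ne']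
    have h1 : f x0 ≤ f (‖x‖⁻¹ • x) := hmin hmem
    have hfx1 : f x = 1 := hx.2
    rw [map_smul, smul_eq_mul, hfx1, mul_one] at h1
    calc ‖x‖ = (‖x‖⁻¹)⁻¹ := by rw [inv_inv]
    _ ≤ (f x0)⁻¹ := by
        apply inv_anti₀ hm h1
  set A := closure B with hA
  have hAcpt : IsCompact A := by
    refine Metric.isCompact_of_isClosed_isBounded isClosed_closure ?_
    refine Bornology.IsBounded.closure ?_
    exact (isBounded_iff_forall_norm_le.2 ⟨(f x0)⁻¹, fun x hx => hKb x (hBK hx)⟩)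
  have hAK : A ⊆ K := closure_minimal hBK hKclosed
  set D := convexHull ℝ A with hD
  have hDcpt : IsCompact D := aux_isCompact_convexHull hAcpt
  have hDK : D ⊆ K := convexHull_min hAK hKconv
  set e := (f r)⁻¹ • r with he
  -- normalized conical combinations are convex combinations of B
  have hcvx : ∀ x ∈ CH, 0 < f x → (f x)⁻¹ • x ∈ convexHull ℝ B := by
    rintro x ⟨k, c, v, hc, hv, rfl⟩ hfX
    set X := ∑ i, c i • v i with hX
    have hfv : ∀ i, 0 < f (v i) := fun i => hfΩ _ (hv i)
    have hfX' : f X = ∑ i, c i * f (v i) := by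
      rw [hX, map_sum]; simp [map_smul, smul_eq_mul]
    set W : Fin k → ℝ := fun i => c i * f (v i) / f X with hW
    have hW0 : ∀ i, 0 ≤ W i := fun i => by
      apply div_nonneg (mul_nonneg (hc i) (hfv i).le) hfX.le
    have hW1 : ∑ i, W i = 1 := by
      rw [hW, ← Finset.sum_div, ← hfX', div_self hfX.ne']
    have hp : ∀ i, (f (v i))⁻¹ • v i ∈ B := fun i => ⟨v i, hv i, rfl⟩
    have hmem := Finset.centerMass_mem_convexHull (Finset.univ : Finset (Fin k))
      (fun i _ => hW0 i) (by rw [hW1]; norm_num) (fun i _ => hp i)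
    rw [Finset.centerMass_eq_of_sum_1 _ _ hW1] at hmem
    have heq : ∑ i, W i • (f (v i))⁻¹ • v i = (f X)⁻¹ • X := by
      rw [hX, Finset.smul_sum]
      refine Finset.sum_congr rfl fun i _ => ?_
      rw [smul_smul, smul_smul, hW]
      congr 1
      rw [div_mul_eq_mul_div, mul_assoc, mul_inv_cancel₀ (hfv i).ne', mul_one, div_eq_inv_mul]
    rwa [heq] at hmem
  obtain ⟨x, hxmem, hxlim⟩ := mem_closure_iff_seq_limit.1 hrC
  have hfx : Filter.Tendsto (fun k => f (x k)) Filter.atTop (nhds (f r)) :=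
    (f.continuous.tendsto r).comp hxlim
  have hev : ∀ᶠ k in Filter.atTop, 0 < f (x k) := hfx.eventually (lt_mem_nhds hfr)
  have hel : Filter.Tendsto (fun k => (f (x k))⁻¹ • x k) Filter.atTop (nhds e) :=
    (hfx.inv₀ hfr.ne').smul hxlim
  have heB : e ∈ closure (convexHull ℝ B) :=
    mem_closure_of_tendsto hel (hev.mono fun k hk => hcvx _ (hxmem k) hk)
  have heD : e ∈ D :=
    (closure_minimal (convexHull_mono subset_closure) hDcpt.isClosed) heB
  have hexte : e ∈ D.extremePoints ℝ := by
    refine ⟨heD, fun x1 hx1 x2 hx2 hseg => ?_⟩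
    obtain ⟨a, b, ha, hb, hab, habe⟩ := hseg
    have hK1 := hDK hx1
    have hK2 := hDK hx2
    have hfx1 : f x1 = 1 := hK1.2
    have hfx2 : f x2 = 1 := hK2.2
    have hre : r = (f r * a) • x1 + (f r * b) • x2 := by
      calc r = f r • e := (smul_inv_smul₀ hfr.ne' r).symm
      _ = f r • (a • x1 + b • x2) := by rw [← habe]
      _ = (f r * a) • x1 + (f r * b) • x2 := by rw [smul_add, smul_smul, smul_smul]
    obtain ⟨⟨s1, hs1, he1⟩, ⟨s2, hs2, he2⟩⟩ := hext _
      (hCsmul _ (mul_pos hfr ha).le _ hK1.1) _ (hCsmul _ (mul_pos hfr hb).le _ hK2.1) hre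
    have hs1a : s1 = a := by
      have := congrArg f he1
      rw [map_smul, map_smul, smul_eq_mul, smul_eq_mul, hfx1, mul_one,
        mul_comm (f r) a] at this
      exact (mul_right_cancel₀ hfr.ne' this).symm
    have hs2b : s2 = b := by
      have := congrArg f he2
      rw [map_smul, map_smul, smul_eq_mul, smul_eq_mul, hfx2, mul_one,
        mul_comm (f r) b] at this
      exact (mul_right_cancel₀ hfr.ne' this).symm
    suffices hboth : x1 = e ∧ x2 = e from hboth.1
    constructor
    · rw [hs1a] at he1
      have : x1 = ((f r * a)⁻¹ * a) • r := by
        rw [← smul_smul, ← he1, inv_smul_smul₀ (mul_pos hfr ha).ne']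
      rw [this, he]
      congr 1
      rw [mul_inv, mul_assoc, inv_mul_cancel₀ (ne_of_gt ha), mul_one]
    · rw [hs2b] at he2
      have : x2 = ((f r * b)⁻¹ * b) • r := by
        rw [← smul_smul, ← he2, inv_smul_smul₀ (mul_pos hfr hb).ne']
      rw [this, he]
      congr 1
      rw [mul_inv, mul_assoc, inv_mul_cancel₀ (ne_of_gt hb), mul_one]
  have heA : e ∈ A := extremePoints_convexHull_subset hexte
  obtain ⟨bs, hbB, hblim⟩ := mem_closure_iff_seq_limit.1 heA
  choose ω hωΩ hωeq using hbB
  refine ⟨f, ω, fun k => f r * (f (ω k))⁻¹, hf, hωΩ, fun k => mul_pos hfr (inv_pos.2 (hfΩ _ (hωΩ k))), ?_⟩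
  have : ∀ k, (f r * (f (ω k))⁻¹) • ω k = f r • bs k := fun k => by
    rw [← hωeq k, smul_smul]
  simp_rw [this]
  have := hblim.const_smul (f r)
  rwa [he, smul_inv_smul₀ hfr.ne'] at this

lemma aux_extract {Ω : Set E} {r : E}
    (f : E →L[ℝ] ℝ) (hfr : 0 < f r)
    (w : ℕ → E) (lam : ℕ → ℝ) (hw : ∀ k, w k ∈ Ω) (hfw : ∀ k, 0 < f (w k))
    (hlam : ∀ k, 0 < lam k)
    (hlim : Filter.Tendsto (fun k => lam k • w k) Filter.atTop (nhds r))
    (hleft : ∀ ω ∈ Ω, ∀ t : ℝ, 0 < t → r ≠ t • ω) :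
    ∃ (rs : ℕ → E) (lam' : ℕ → ℝ), (∀ i, rs i ∈ Ω) ∧
      (∀ i j, i ≠ j → ∀ t : ℝ, 0 < t → rs i ≠ t • rs j) ∧
      (∀ i, 0 < lam' i) ∧
      Filter.Tendsto (fun i => lam' i • rs i) Filter.atTop (nhds r) := by
  classical
  have claimA : ∀ k, {m | ∃ t : ℝ, 0 < t ∧ w m = t • w k}.Finite := by
    intro k
    by_contra hinf
    have hinf' : {m | ∃ t : ℝ, 0 < t ∧ w m = t • w k}.Infinite := hinf
    set S := {m | ∃ t : ℝ, 0 < t ∧ w m = t • w k} with hSdef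
    have hfreq : ∃ᶠ m in Filter.atTop, m ∈ S := Nat.frequently_atTop_iff_infinite.2 hinf'
    have hNB : (Filter.atTop ⊓ Filter.principal S).NeBot := by
      have := Filter.frequently_iff_neBot.1 hfreq
      simpa using this
    set F := Filter.atTop ⊓ Filter.principal S with hF
    haveI := hNB
    have tsel : ∀ m, m ∈ S → ∃ t : ℝ, 0 < t ∧ w m = t • w k := fun m hm => hm
    set g : ℕ → ℝ := fun m => if h : m ∈ S then lam m * (tsel m h).choose else 1 with hg
    have hgspec : ∀ m ∈ S, lam m • w m = g m • w k := by
      intro m hm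
      have hc := (tsel m hm).choose_spec
      rw [hg]; simp only [dif_pos hm]
      rw [← smul_smul, ← hc.2]
    have h1 : Filter.Tendsto (fun m => lam m • w m) F (nhds r) := hlim.mono_left inf_le_left
    have hevS : ∀ᶠ m in F, m ∈ S :=
      Filter.eventually_inf_principal.2 (Filter.Eventually.of_forall fun m hm => hm)
    have h3 : Filter.Tendsto (fun m => g m • w k) F (nhds r) :=
      (Filter.tendsto_congr' (hevS.mono fun m hm => hgspec m hm)).1 h1
    have h4 : Filter.Tendsto (fun m => g m * f (w k)) F (nhds (f r)) := by
      have := (f.continuous.tendsto r).comp h3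
      simpa [Function.comp_def, map_smul, smul_eq_mul] using this
    have h5 : Filter.Tendsto g F (nhds (f r / f (w k))) := by
      have h := h4.div_const (f (w k))
      have heq : ∀ m, g m * f (w k) / f (w k) = g m := fun m =>
        mul_div_cancel_right₀ _ (hfw k).ne'
      simpa [heq] using h
    have h6 := h5.smul_const (w k)
    have huniq : r = (f r / f (w k)) • w k := tendsto_nhds_unique h3 h6
    exact hleft (w k) (hw k) _ (div_pos hfr (hfw k)) huniq
  have hstep : ∀ (p : ℕ) (s : Finset ℕ), ∃ m, p < m ∧ ∀ k ∈ s, ∀ t : ℝ, 0 < t → w m ≠ t • w k := by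
    intro p s
    have hfin : (⋃ k ∈ s, {m | ∃ t : ℝ, 0 < t ∧ w m = t • w k}).Finite :=
      Set.Finite.biUnion s.finite_toSet fun k _ => claimA k
    obtain ⟨ub, hub⟩ := hfin.bddAbove
    refine ⟨max p ub + 1, Nat.lt_succ_of_le (le_max_left p ub), ?_⟩
    intro k hk t ht heq
    have hmem : (max p ub + 1) ∈ ⋃ k ∈ s, {m | ∃ t : ℝ, 0 < t ∧ w m = t • w k} :=
      Set.mem_biUnion hk ⟨t, ht, heq⟩
    have hle : (max p ub + 1) ≤ ub := hub hmem
    omega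
  let Fc : ℕ → ℕ × Finset ℕ := fun n => Nat.rec ((0 : ℕ), ({0} : Finset ℕ))
    (fun _ q => ((hstep q.1 q.2).choose, insert (hstep q.1 q.2).choose q.2)) n
  have hmono : ∀ n, (Fc n).1 < (Fc (n + 1)).1 := fun n => (hstep (Fc n).1 (Fc n).2).choose_spec.1
  have hmem0 : ∀ n, (Fc n).1 ∈ (Fc n).2 := by
    intro n
    induction n with
    | zero => exact Finset.mem_singleton_self 0
    | succ n ih => exact Finset.mem_insert_self _ _
  have hsub : ∀ n, (Fc n).2 ⊆ (Fc (n + 1)).2 := fun n => Finset.subset_insert _ _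
  have hmemle : ∀ i n, i ≤ n → (Fc i).1 ∈ (Fc n).2 := by
    intro i n hin
    induction n with
    | zero =>
      obtain rfl : i = 0 := Nat.le_zero.1 hin
      exact hmem0 0
    | succ n ih =>
      rcases eq_or_lt_of_le hin with heq | hlt
      · subst heq; exact hmem0 (n + 1)
      · exact hsub n (ih (Nat.lt_succ_iff.1 hlt))
  have hkey : ∀ i n, i ≤ n → ∀ t : ℝ, 0 < t → w ((Fc (n + 1)).1) ≠ t • w ((Fc i).1) :=
    fun i n hin => (hstep (Fc n).1 (Fc n).2).choose_spec.2 _ (hmemle i n hin)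
  refine ⟨fun i => w ((Fc i).1), fun i => lam ((Fc i).1), fun i => hw _, ?_, fun i => hlam _, ?_⟩
  · intro i j hij t ht heq
    dsimp only at heq
    rcases lt_or_gt_of_ne hij with h | h
    · obtain ⟨n, rfl⟩ : ∃ n, j = n + 1 := ⟨j - 1, by omega⟩
      refine hkey i n (by omega) t⁻¹ (inv_pos.2 ht) ?_
      rw [heq, smul_smul, inv_mul_cancel₀ ht.ne', one_smul]
    · obtain ⟨n, rfl⟩ : ∃ n, i = n + 1 := ⟨i - 1, by omega⟩
      exact hkey j n (by omega) t ht heq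
  · exact hlim.comp ((strictMono_nat_of_lt_succ hmono).tendsto_atTop)

/-- If `Ω ⊆ ℝ^{n+1}` contains `(0,…,0,1)`, does not contain `0`, and
`cl cone(Ω)` is pointed, then every extreme ray `r` of `cl cone(Ω)` is either a
positive multiple of an element of `Ω`, or the conical limit of a sequence of
pairwise non-proportional elements of `Ω`. -/
theorem extreme_ray_characterization (n : ℕ) (Ω : Set ((Fin n → ℝ) × ℝ))
    (h0 : ((0 : Fin n → ℝ), (1 : ℝ)) ∈ Ω)
    (h0n : (0 : (Fin n → ℝ) × ℝ) ∉ Ω)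
    (C : Set ((Fin n → ℝ) × ℝ)) (hC : C = closure (conicalHull Ω))
    (hpointed : C ∩ (-C) = {0})
    (r : (Fin n → ℝ) × ℝ) (hr : r ≠ 0) (hrC : r ∈ C)
    (hext : ∀ a ∈ C, ∀ b ∈ C, r = a + b →
      (∃ s : ℝ, 0 ≤ s ∧ a = s • r) ∧ (∃ s : ℝ, 0 ≤ s ∧ b = s • r)) :
    (∃ ω ∈ Ω, ∃ t : ℝ, 0 < t ∧ r = t • ω) ∨
    (∃ (rs : ℕ → (Fin n → ℝ) × ℝ) (lam : ℕ → ℝ),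
      (∀ i, rs i ∈ Ω) ∧
      (∀ i j, i ≠ j → ∀ t : ℝ, 0 < t → rs i ≠ t • rs j) ∧
      (∀ i, 0 < lam i) ∧
      Filter.Tendsto (fun i => lam i • rs i) Filter.atTop (nhds r)) := by
  by_cases hleft : ∃ ω ∈ Ω, ∃ t : ℝ, 0 < t ∧ r = t • ω
  · exact Or.inl hleft
  · right
    push_neg at hleft
    obtain ⟨f, w, lam, hf, hwΩ, hlam, hlim⟩ := aux_exists_seq h0n hC hpointed hr hrC hext
    have hfr : 0 < f r := hf r hrC hr
    have hfw : ∀ k, 0 < f (w k) := fun k => by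
      refine hf _ ?_ (fun e => h0n (e ▸ hwΩ k))
      rw [hC]
      exact subset_closure (mem_conicalHull_self (hwΩ k))
    exact aux_extract f hfr w lam hwΩ hfw hlam hlim hleft
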